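/- Let m, n, p, q be positive integers and let φ : M_{m×p} → M_{m×q} and ψ : M_{n×p} → M_{n×q} be F-linear maps such that φ(A·B) = A·ψ(B) for all A ∈ M_{m×n} and B ∈ M_{n×p}. Then there exists a matrix X ∈ M_{p×q} such that φ(C) = C·X for all C ∈ M_{m×p} and ψ(D) = D·X for all D ∈ M_{n×p}. -/

import Mathlib

open Matrix

private lemma sbm_mul_apply {F : Type*} [Field F] {r n q : ℕ}
    (i : Fin r) (z : Fin n) (M : Matrix (Fin n) (Fin q) F) (a : Fin r) (b : Fin q) :
    (Matrix.single i z (1 : F) * M) a b = if a = i then M z b else 0 := by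
  simp only [mul_apply, Matrix.single, of_apply]
  by_cases h : a = i
  · subst h
    rw [Finset.sum_eq_single z] <;> simp +contextual [eq_comm]
  · rw [Finset.sum_eq_zero]
    · simp [h]
    · intro x _
      simp [Ne.symm h]

private lemma sbm_mul_sbm {F : Type*} [Field F] {r n p : ℕ}
    (i : Fin r) (z : Fin n) (k : Fin p) :
    Matrix.single i z (1 : F) * Matrix.single z k (1 : F) = Matrix.single i k (1 : F) := by
  ext a b
  rw [sbm_mul_apply]
  by_cases h : a = i
  · subst h; simp [Matrix.single]
  · rw [if_neg h]
    exact (if_neg (by rintro ⟨rfl, -⟩; exact h rfl)).symm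

/-- If linear maps `φ : M_{m×p} → M_{m×q}` and `ψ : M_{n×p} → M_{n×q}` satisfy
`φ(A·B) = A·ψ(B)` for all `A ∈ M_{m×n}`, `B ∈ M_{n×p}`, then there is `X ∈ M_{p×q}` with
`φ(C) = C·X` and `ψ(D) = D·X`. -/
theorem stmt0 {F : Type*} [Field F] (m n p q : ℕ)
    (hm : 0 < m) (hn : 0 < n) (hp : 0 < p) (hq : 0 < q)
    (φ : Matrix (Fin m) (Fin p) F →ₗ[F] Matrix (Fin m) (Fin q) F)
    (ψ : Matrix (Fin n) (Fin p) F →ₗ[F] Matrix (Fin n) (Fin q) F)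
    (h : ∀ (A : Matrix (Fin m) (Fin n) F) (B : Matrix (Fin n) (Fin p) F),
      φ (A * B) = A * ψ B) :
    ∃ X : Matrix (Fin p) (Fin q) F,
      (∀ C : Matrix (Fin m) (Fin p) F, φ C = C * X) ∧
      (∀ D : Matrix (Fin n) (Fin p) F, ψ D = D * X) := by
  set z : Fin n := ⟨0, hn⟩ with hz
  set w : Fin m := ⟨0, hm⟩ with hw
  -- ψ is equivariant for square matrices
  have hψ : ∀ (A : Matrix (Fin n) (Fin n) F) (B : Matrix (Fin n) (Fin p) F),
      ψ (A * B) = A * ψ B := by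
    intro A B
    ext i j
    have h1 := h (Matrix.single w i (1:F)) (A * B)
    have h2 := h (Matrix.single w i (1:F) * A) B
    rw [← Matrix.mul_assoc] at h1
    rw [h1, Matrix.mul_assoc] at h2
    have := congrArg (fun M => M w j) h2
    simpa [sbm_mul_apply] using this
  set X : Matrix (Fin p) (Fin q) F :=
    fun k j => ψ (Matrix.single z k 1) z j with hX
  have hφE : ∀ (i : Fin m) (k : Fin p),
      φ (Matrix.single i k (1:F)) = Matrix.single i k (1:F) * X := by
    intro i k
    rw [← sbm_mul_sbm i z k, h, Matrix.mul_assoc]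
    ext a b
    rw [sbm_mul_apply, sbm_mul_apply, sbm_mul_apply]
    simp [hX]
  have hψE : ∀ (i : Fin n) (k : Fin p),
      ψ (Matrix.single i k (1:F)) = Matrix.single i k (1:F) * X := by
    intro i k
    rw [← sbm_mul_sbm i z k, hψ, Matrix.mul_assoc]
    ext a b
    rw [sbm_mul_apply, sbm_mul_apply, sbm_mul_apply]
    simp [hX]
  have hsmul : ∀ {r s : ℕ} (M : Matrix (Fin r) (Fin s) F) (i : Fin r) (k : Fin s),
      Matrix.single i k (M i k) = M i k • Matrix.single i k (1:F) := by
    intro r s M i k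
    rw [smul_single, smul_eq_mul, mul_one]
  refine ⟨X, ?_, ?_⟩
  · intro C
    conv_lhs => rw [matrix_eq_sum_single C]
    conv_rhs => rw [matrix_eq_sum_single C]
    rw [map_sum, Matrix.sum_mul]
    refine Finset.sum_congr rfl fun i _ => ?_
    rw [map_sum, Matrix.sum_mul]
    refine Finset.sum_congr rfl fun k _ => ?_
    rw [hsmul C i k, LinearMap.map_smul, hφE, Matrix.smul_mul]
  · intro D
    conv_lhs => rw [matrix_eq_sum_single D]
    conv_rhs => rw [matrix_eq_sum_single D]
    rw [map_sum, Matrix.sum_mul]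
    refine Finset.sum_congr rfl fun i _ => ?_
    rw [map_sum, Matrix.sum_mul]
    refine Finset.sum_congr rfl fun k _ => ?_
    rw [hsmul D i k, LinearMap.map_smul, hψE, Matrix.smul_mul]
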